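/- Let d be a positive integer, σ > 0, and let ε be a random vector in the Euclidean space ℝ^d (with the Euclidean norm ‖·‖₂) whose law is the product over the d coordinates of the one-dimensional Gaussian measure with mean 0 and variance σ². Then for every u ≥ 2σ√d, one has P(‖ε‖₂ > u) ≤ exp(−u²/(8σ²)). -/

import Mathlib

open MeasureTheory ProbabilityTheory Real

lemma gauss_key (σ : ℝ) (hσ : 0 < σ) (x : ℝ) :
    gaussianPDFReal 0 ⟨σ ^ 2, sq_nonneg σ⟩ x * Real.exp (x ^ 2 / (4 * σ ^ 2)) =
      (Real.sqrt (2 * π * σ ^ 2))⁻¹ * Real.exp (-(4 * σ ^ 2)⁻¹ * x ^ 2) := by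
  erw [gaussianPDFReal_def]
  change (√(2 * π * σ ^ 2))⁻¹ * rexp (-(x - 0) ^ 2 / (2 * σ ^ 2)) * rexp (x ^ 2 / (4 * σ ^ 2)) = _
  rw [mul_assoc, ← Real.exp_add]
  congr 1
  have : (σ:ℝ) ^ 2 ≠ 0 := by positivity
  field_simp
  ring

lemma gauss_int (σ : ℝ) (hσ : 0 < σ) :
    Integrable (fun x => Real.exp (x ^ 2 / (4 * σ ^ 2)))
      (gaussianReal 0 ⟨σ ^ 2, sq_nonneg σ⟩) ∧
    ∫ x, Real.exp (x ^ 2 / (4 * σ ^ 2)) ∂(gaussianReal 0 ⟨σ ^ 2, sq_nonneg σ⟩)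
      = Real.sqrt 2 := by
  have hv : (⟨σ ^ 2, sq_nonneg σ⟩ : NNReal) ≠ 0 := by
    simp [← NNReal.coe_ne_zero]; positivity
  rw [gaussianReal_of_var_ne_zero _ hv]
  have hpdf : gaussianPDF 0 (⟨σ ^ 2, sq_nonneg σ⟩ : NNReal)
      = fun x => ((Real.toNNReal (gaussianPDFReal 0 ⟨σ ^ 2, sq_nonneg σ⟩ x) : NNReal) : ENNReal) :=
    rfl
  have hm : Measurable fun x => Real.toNNReal (gaussianPDFReal 0 (⟨σ ^ 2, sq_nonneg σ⟩ : NNReal) x) :=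
    (measurable_gaussianPDFReal _ _).real_toNNReal
  have hsmul : (fun x => Real.toNNReal (gaussianPDFReal 0 (⟨σ ^ 2, sq_nonneg σ⟩ : NNReal) x)
        • Real.exp (x ^ 2 / (4 * σ ^ 2)))
      = fun x => (Real.sqrt (2 * π * σ ^ 2))⁻¹ * Real.exp (-(4 * σ ^ 2)⁻¹ * x ^ 2) := by
    funext x
    erw [NNReal.smul_def, smul_eq_mul, Real.coe_toNNReal _ (gaussianPDFReal_nonneg _ _ _)]
    exact gauss_key σ hσ x
  have hint : Integrable (fun x => (Real.sqrt (2 * π * σ ^ 2))⁻¹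
      * Real.exp (-(4 * σ ^ 2)⁻¹ * x ^ 2)) := by
    exact (integrable_exp_neg_mul_sq (by positivity)).const_mul _
  constructor
  · rw [hpdf, integrable_withDensity_iff_integrable_smul hm, hsmul]
    exact hint
  · rw [hpdf, integral_withDensity_eq_integral_smul hm]
    rw [show (fun x => (Real.toNNReal (gaussianPDFReal 0 (⟨σ ^ 2, sq_nonneg σ⟩ : NNReal) x))
        • Real.exp (x ^ 2 / (4 * σ ^ 2))) = _ from hsmul]
    rw [integral_const_mul, integral_gaussian]
    rw [show π / (4 * σ ^ 2)⁻¹ = π * (4 * σ ^ 2) by field_simp]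
    rw [← Real.sqrt_inv, ← Real.sqrt_mul (by positivity)]
    rw [show (2 * π * σ ^ 2)⁻¹ * (π * (4 * σ ^ 2)) = 2 by field_simp; ring]

lemma aux_int {d : ℕ} (μ : Measure ℝ) [SigmaFinite μ] (f : ℝ → ℝ) (hf : Integrable f μ) :
    Integrable (fun x : Fin d → ℝ => ∏ i, f (x i)) (Measure.pi fun _ => μ) := by
  letI : MeasureSpace ℝ := ⟨μ⟩
  exact Integrable.fintype_prod (fun _ => hf)

lemma aux_eq {d : ℕ} (μ : Measure ℝ) [SigmaFinite μ] (f : ℝ → ℝ) :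
    ∫ x : Fin d → ℝ, ∏ i, f (x i) ∂(Measure.pi fun _ => μ) = (∫ x, f x ∂μ) ^ d := by
  letI : MeasureSpace ℝ := ⟨μ⟩
  simpa using integral_fintype_prod_eq_pow (ι := Fin d) f

theorem stmt_2 (d : ℕ) (hd : 0 < d) (σ : ℝ) (hσ : 0 < σ)
    {Ω : Type*} [MeasureSpace Ω] [IsProbabilityMeasure (ℙ : Measure Ω)]
    (ε : Ω → (Fin d → ℝ)) (hmeas : Measurable ε)
    (hlaw : Measure.map ε ℙ =
      Measure.pi (fun _ : Fin d => gaussianReal 0 ⟨σ ^ 2, sq_nonneg σ⟩)) :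
    ∀ u : ℝ, 2 * σ * Real.sqrt d ≤ u →
      (ℙ {ω | u < Real.sqrt (∑ i, (ε ω i) ^ 2)}).toReal ≤
        Real.exp (-u ^ 2 / (8 * σ ^ 2)) := by
  intro u hu
  obtain ⟨hint1, hval1⟩ := gauss_int σ hσ
  set ν := Measure.pi (fun _ : Fin d => gaussianReal 0 (⟨σ ^ 2, sq_nonneg σ⟩ : NNReal)) with hν
  set g : (Fin d → ℝ) → ℝ := fun x => Real.exp ((∑ i, x i ^ 2) / (4 * σ ^ 2)) with hg
  have hgprod : g = fun x => ∏ i, Real.exp (x i ^ 2 / (4 * σ ^ 2)) := by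
    funext x
    simp only [hg]
    rw [Finset.sum_div, Real.exp_sum]
  have hgm : Measurable g := by
    apply Real.measurable_exp.comp
    exact (Finset.measurable_sum _ fun i _ => ((measurable_pi_apply i).pow_const 2)).div_const _
  -- integrability of g ∘ ε
  have hintν : Integrable g ν := by
    rw [hgprod]
    haveI : IsProbabilityMeasure (gaussianReal 0 ⟨σ ^ 2, sq_nonneg σ⟩) := instIsProbabilityMeasureGaussianReal _ _
    exact aux_int _ _ hint1
  have hintY : Integrable (fun ω => g (ε ω)) ℙ := by
    rw [← Function.comp_def]
    exact (integrable_map_measure (hlaw ▸ hintν.aestronglyMeasurable) hmeas.aemeasurable).mp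
      (by rwa [hlaw])
  have hEY : ∫ ω, g (ε ω) ∂ℙ = (Real.sqrt 2) ^ d := by
    rw [show (∫ ω, g (ε ω) ∂ℙ) = ∫ x, g x ∂(Measure.map ε ℙ) from
      (integral_map hmeas.aemeasurable (hlaw ▸ hintν.aestronglyMeasurable)).symm, hlaw]
    rw [← hval1]
    rw [hgprod, hν]
    haveI : IsProbabilityMeasure (gaussianReal 0 ⟨σ ^ 2, sq_nonneg σ⟩) := instIsProbabilityMeasureGaussianReal _ _
    exact aux_eq (gaussianReal 0 ⟨σ ^ 2, sq_nonneg σ⟩) (fun y => Real.exp (y ^ 2 / (4 * σ ^ 2)))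
  have hu0 : 0 ≤ u := le_trans (by positivity) hu
  -- event inclusion
  have hsub : {ω | u < Real.sqrt (∑ i, (ε ω i) ^ 2)}
      ⊆ {ω | Real.exp (u ^ 2 / (4 * σ ^ 2)) ≤ g (ε ω)} := by
    intro ω hω
    simp only [Set.mem_setOf_eq] at hω ⊢
    have h1 : u ^ 2 < ∑ i, (ε ω i) ^ 2 := (Real.lt_sqrt hu0).mp hω
    rw [hg]
    apply Real.exp_le_exp.mpr
    gcongr
  have hmono : (ℙ {ω | u < Real.sqrt (∑ i, (ε ω i) ^ 2)}).toReal
      ≤ (ℙ {ω | Real.exp (u ^ 2 / (4 * σ ^ 2)) ≤ g (ε ω)}).toReal :=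
    ENNReal.toReal_mono (measure_ne_top _ _) (measure_mono hsub)
  have hmarkov := mul_meas_ge_le_integral_of_nonneg
    (μ := ℙ) (f := fun ω => g (ε ω)) (ae_of_all _ fun ω => (Real.exp_pos _).le) hintY
    (Real.exp (u ^ 2 / (4 * σ ^ 2)))
  rw [hEY] at hmarkov
  have hP : (ℙ {ω | Real.exp (u ^ 2 / (4 * σ ^ 2)) ≤ g (ε ω)}).toReal
      ≤ (Real.sqrt 2) ^ d * Real.exp (-(u ^ 2 / (4 * σ ^ 2))) := by
    rw [Real.exp_neg, mul_comm _ (Real.exp _)⁻¹, ← div_eq_inv_mul]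
    rw [le_div_iff₀ (Real.exp_pos _)]
    rw [measureReal_def] at hmarkov
    linarith [hmarkov]
  refine le_trans (le_trans hmono hP) ?_
  -- arithmetic: (√2)^d * exp(-u²/(4σ²)) ≤ exp(-u²/(8σ²))
  have h2 : (Real.sqrt 2) ^ d ≤ Real.exp ((d : ℝ) / 2) := by
    have : Real.sqrt 2 ≤ Real.exp (1 / 2) := by
      rw [show (1:ℝ)/2 = 1/2 from rfl, Real.exp_half]
      exact Real.sqrt_le_sqrt (by linarith [Real.add_one_le_exp (1:ℝ)])
    calc (Real.sqrt 2) ^ d ≤ (Real.exp (1/2)) ^ d :=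
          pow_le_pow_left₀ (Real.sqrt_nonneg _) this d
      _ = Real.exp ((d:ℝ) / 2) := by
          rw [← Real.exp_nat_mul, mul_one_div]
  have hu2 : 4 * σ ^ 2 * d ≤ u ^ 2 := by
    have := pow_le_pow_left₀ (by positivity) hu 2
    calc 4 * σ ^ 2 * d = (2 * σ * Real.sqrt d) ^ 2 := by
          rw [mul_pow, mul_pow, Real.sq_sqrt (Nat.cast_nonneg d)]; ring
      _ ≤ u ^ 2 := this
  calc (Real.sqrt 2) ^ d * Real.exp (-(u ^ 2 / (4 * σ ^ 2)))
      ≤ Real.exp ((d : ℝ) / 2) * Real.exp (-(u ^ 2 / (4 * σ ^ 2))) := by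
        gcongr
    _ = Real.exp ((d : ℝ) / 2 - u ^ 2 / (4 * σ ^ 2)) := by
        rw [← Real.exp_add, ← sub_eq_add_neg]
    _ ≤ Real.exp (-u ^ 2 / (8 * σ ^ 2)) := by
        apply Real.exp_le_exp.mpr
        have hsplit : u ^ 2 / (4 * σ ^ 2) = 2 * (u ^ 2 / (8 * σ ^ 2)) := by
          field_simp; ring
        have hdle : (d : ℝ) / 2 ≤ u ^ 2 / (8 * σ ^ 2) := by
          rw [div_le_div_iff₀ (by norm_num) (by positivity)]
          nlinarith [hu2]
        rw [neg_div]
        linarith
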